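/- Let m₀, i, m₁ : ℝ → ℝ → ℝ be continuous (m₁ independent of disease duration) and S₀ : ℝ → ℝ be continuous. Define S(t,a) := S₀(t−a)·exp(−∫₀ᵃ (m₀(t−a+τ,τ) + i(t−a+τ,τ)) dτ). Suppose γ : ℝ × ℝ → ℝ satisfies γ(u,0) = 0 for all u ∈ ℝ, and for every u ∈ ℝ the function α ↦ γ(u+α, α) is differentiable on [0,∞) with derivative −m₁(u+α, α)·γ(u+α, α) + i(u+α, α)·S(u+α, α). Then for all t ∈ ℝ and a ≥ 0, γ(t,a) = ∫₀ᵃ i(t−δ, a−δ)·S(t−δ, a−δ)·exp(−∫₀^δ m₁(t−δ+τ, a−δ+τ) dτ) dδ. (Uniqueness and explicit solution of the Cauchy problem (∂ₜ+∂ₐ)γ = −m₁·γ + i·S, γ(t−a,0) = 0.) -/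

import Mathlib

open intervalIntegral Set

/-- Uniqueness and explicit solution of the Cauchy problem
`(∂ₜ+∂ₐ)γ = −m₁·γ + i·S`, `γ(t−a,0) = 0`, in the duration-independent case:
any solution `γ` equals
`∫₀ᵃ i(t−δ,a−δ)·S(t−δ,a−δ)·exp(−∫₀^δ m₁(t−δ+τ,a−δ+τ) dτ) dδ` for `a ≥ 0`. -/
theorem keiding_Cstar_pde_unique
    (m₀ i m₁ : ℝ → ℝ → ℝ)
    (hm₀ : Continuous fun q : ℝ × ℝ => m₀ q.1 q.2)
    (hi : Continuous fun q : ℝ × ℝ => i q.1 q.2)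
    (hm₁ : Continuous fun q : ℝ × ℝ => m₁ q.1 q.2)
    (S₀ : ℝ → ℝ) (hS₀ : Continuous S₀)
    (S : ℝ → ℝ → ℝ)
    (hS : ∀ t a : ℝ, S t a = S₀ (t - a) *
      Real.exp (-∫ τ in (0:ℝ)..a, (m₀ (t - a + τ) τ + i (t - a + τ) τ)))
    (γ : ℝ → ℝ → ℝ)
    (hinit : ∀ u : ℝ, γ u 0 = 0)
    (hderiv : ∀ u : ℝ, ∀ α ∈ Set.Ici (0:ℝ),
      HasDerivWithinAt (fun β : ℝ => γ (u + β) β)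
        (-m₁ (u + α) α * γ (u + α) α + i (u + α) α * S (u + α) α)
        (Set.Ici (0:ℝ)) α) :
    ∀ t a : ℝ, 0 ≤ a →
      γ t a = ∫ δ in (0:ℝ)..a, i (t - δ) (a - δ) * S (t - δ) (a - δ) *
        Real.exp (-∫ τ in (0:ℝ)..δ, m₁ (t - δ + τ) (a - δ + τ)) := by
  intro t a ha
  set u : ℝ := t - a with hu
  -- characteristic data
  have hchar : Continuous fun α : ℝ => ((u + α, α) : ℝ × ℝ) :=
    (continuous_const.add continuous_id).prodMk continuous_id
  have hMc : Continuous fun α : ℝ => m₁ (u + α) α := hm₁.comp hchar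
  -- S along the characteristic
  have hSα : ∀ α : ℝ, S (u + α) α = S₀ u *
      Real.exp (-∫ τ in (0:ℝ)..α, (m₀ (u + τ) τ + i (u + τ) τ)) := by
    intro α
    rw [hS]
    simp [add_sub_cancel_right]
  have hFc : Continuous fun τ : ℝ => m₀ (u + τ) τ + i (u + τ) τ :=
    (hm₀.comp hchar).add (hi.comp hchar)
  have hPc : Continuous fun α : ℝ => ∫ τ in (0:ℝ)..α, (m₀ (u + τ) τ + i (u + τ) τ) :=
    intervalIntegral.continuous_primitive (fun a b => hFc.intervalIntegrable a b) 0
  have hSc : Continuous fun α : ℝ => S (u + α) α := by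
    have : (fun α : ℝ => S (u + α) α) = fun α : ℝ => S₀ u *
        Real.exp (-∫ τ in (0:ℝ)..α, (m₀ (u + τ) τ + i (u + τ) τ)) := funext hSα
    rw [this]
    exact continuous_const.mul (Real.continuous_exp.comp hPc.neg)
  have hgc : Continuous fun α : ℝ => i (u + α) α * S (u + α) α :=
    (hi.comp hchar).mul hSc
  -- the primitive of m₁ along the characteristic
  set IM : ℝ → ℝ := fun α => ∫ τ in (0:ℝ)..α, m₁ (u + τ) τ with hIM
  have hIMc : Continuous IM :=
    intervalIntegral.continuous_primitive (fun a b => hMc.intervalIntegrable a b) 0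
  have hIMd : ∀ α : ℝ, HasDerivAt IM (m₁ (u + α) α) α := by
    intro α
    exact intervalIntegral.integral_hasDerivAt_right (hMc.intervalIntegrable 0 α)
      (hMc.stronglyMeasurableAtFilter _ _) hMc.continuousAt
  -- the integrated quantity h
  set h : ℝ → ℝ := fun α => γ (u + α) α * Real.exp (IM α) with hh
  have hhd : ∀ α ∈ Set.Ici (0:ℝ), HasDerivWithinAt h
      (i (u + α) α * S (u + α) α * Real.exp (IM α)) (Set.Ici (0:ℝ)) α := by
    intro α hα
    have h1 := hderiv u α hα
    have h2 : HasDerivWithinAt (fun β : ℝ => Real.exp (IM β))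
        (Real.exp (IM α) * m₁ (u + α) α) (Set.Ici (0:ℝ)) α :=
      (hIMd α).hasDerivWithinAt.exp
    have := h1.mul h2
    refine this.congr_deriv ?_
    ring
  -- apply FTC
  have hcont : ContinuousOn h (Set.Icc 0 a) := fun x hx =>
    ((hhd x hx.1).continuousWithinAt).mono Set.Icc_subset_Ici_self
  have hderiv' : ∀ x ∈ Set.Ioo 0 a, HasDerivWithinAt h
      (i (u + x) x * S (u + x) x * Real.exp (IM x)) (Set.Ioi x) x := by
    intro x hx
    exact (hhd x (le_of_lt hx.1)).mono fun y hy => le_of_lt (lt_of_le_of_lt hx.1.le hy)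
  have hgE : Continuous fun s : ℝ => i (u + s) s * S (u + s) s * Real.exp (IM s) :=
    hgc.mul (Real.continuous_exp.comp hIMc)
  have key : (∫ s in (0:ℝ)..a, i (u + s) s * S (u + s) s * Real.exp (IM s)) = h a - h 0 :=
    intervalIntegral.integral_eq_sub_of_hasDeriv_right_of_le ha hcont hderiv'
      (hgE.intervalIntegrable 0 a)
  have h0 : h 0 = 0 := by simp [hh, hinit u]
  have hA : h a = γ t a * Real.exp (IM a) := by
    simp [hh, hu, sub_add_cancel]
  -- solve for γ t a
  have hγ : γ t a = (∫ s in (0:ℝ)..a, i (u + s) s * S (u + s) s * Real.exp (IM s)) *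
      Real.exp (-IM a) := by
    rw [key, h0, hA, sub_zero, mul_assoc, ← Real.exp_add]
    simp
  rw [hγ]
  -- rewrite the RHS integrand
  have hRHS : (∫ δ in (0:ℝ)..a, i (t - δ) (a - δ) * S (t - δ) (a - δ) *
        Real.exp (-∫ τ in (0:ℝ)..δ, m₁ (t - δ + τ) (a - δ + τ)))
      = ∫ δ in (0:ℝ)..a, (fun s => i (u + s) s * S (u + s) s *
          Real.exp (IM s - IM a)) (a - δ) := by
    apply intervalIntegral.integral_congr
    intro δ _
    have e1 : t - δ = u + (a - δ) := by rw [hu]; ring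
    have e7 : (∫ τ in (0:ℝ)..δ, m₁ (t - δ + τ) (a - δ + τ)) = IM a - IM (a - δ) := by
      have e4 := intervalIntegral.integral_comp_add_left (a := (0:ℝ)) (b := δ)
        (fun s => m₁ (u + s) s) (a - δ)
      beta_reduce at e4
      rw [add_zero, sub_add_cancel] at e4
      calc (∫ τ in (0:ℝ)..δ, m₁ (t - δ + τ) (a - δ + τ))
          = ∫ τ in (0:ℝ)..δ, m₁ (u + (a - δ + τ)) (a - δ + τ) := by
            apply intervalIntegral.integral_congr
            intro τ _
            show m₁ (t - δ + τ) (a - δ + τ) = m₁ (u + (a - δ + τ)) (a - δ + τ)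
            congr 1
            rw [hu]; ring
        _ = ∫ s in (a - δ)..a, m₁ (u + s) s := e4
        _ = IM a - IM (a - δ) := by
            rw [hIM]
            exact (intervalIntegral.integral_interval_sub_left
              (hMc.intervalIntegrable 0 a) (hMc.intervalIntegrable 0 (a - δ))).symm
    beta_reduce
    rw [e7, e1, neg_sub]
  rw [hRHS, intervalIntegral.integral_comp_sub_left
    (fun s => i (u + s) s * S (u + s) s * Real.exp (IM s - IM a)) a]
  simp only [sub_self, sub_zero]
  rw [← intervalIntegral.integral_mul_const]
  apply intervalIntegral.integral_congr
  intro s _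
  beta_reduce
  rw [mul_assoc, ← Real.exp_add, ← sub_eq_add_neg]
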